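/- Let A be a positively graded affine domain over k with e(A)=1 and let ∂ be a nonzero homogeneous locally nilpotent derivation on A of degree −d. Let h ∈ ker ∂ be homogeneous of degree m > 0 and F = A/(h−1), assumed to be a domain, with induced derivation ∂̄ and induced ℤ/mℤ-grading. Then the image of the graded kernel A^∂ under the projection A → F equals the kernel F^{∂̄}; consequently the support of the ℤ/mℤ-grading of F^{∂̄} is the subgroup generated by [e(A^∂)] in ℤ/mℤ. -/

import Mathlib

def IsLND {R A : Type*} [CommRing R] [CommRing A] [Algebra R A]
    (D : Derivation R A A) : Prop :=
  ∀ a : A, ∃ n : ℕ, (D.toLinearMap ^ n) a = 0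


section Aux

variable {k A : Type*} [Field k] [CommRing A] [Algebra k A]
variable (𝒜 : ℤ → Submodule k A) [GradedAlgebra 𝒜]

theorem aux_decompose_hmul {m : ℤ} {h : A} (hh : h ∈ 𝒜 m) (b : A) :
    ∀ ν : ℤ, (DirectSum.decompose 𝒜 (h * b) ν : A)
      = h * (DirectSum.decompose 𝒜 b (ν - m) : A) := by
  induction b using DirectSum.Decomposition.inductionOn 𝒜 with
  | zero => intro ν; simp
  | @homogeneous i x =>
      intro ν
      have hx : (x : A) ∈ 𝒜 i := x.2
      have hmul : h * (x : A) ∈ 𝒜 (m + i) := SetLike.mul_mem_graded hh hx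
      rcases eq_or_ne ν (m + i) with rfl | hne
      · rw [DirectSum.decompose_of_mem_same 𝒜 hmul,
          show m + i - m = i by ring, DirectSum.decompose_of_mem_same 𝒜 hx]
      · rw [DirectSum.decompose_of_mem_ne 𝒜 hmul (Ne.symm hne),
          DirectSum.decompose_of_mem_ne 𝒜 hx (by intro hcon; apply hne; omega), mul_zero]
  | add b b' hb hb' =>
      intro ν
      rw [mul_add, DirectSum.decompose_add, DirectSum.add_apply, Submodule.coe_add,
        hb, hb', DirectSum.decompose_add, DirectSum.add_apply, Submodule.coe_add, mul_add]

/-- A nonzero homogeneous element does not lie in the ideal `(h-1)`. -/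
theorem aux_homog_mem_span [IsDomain A] {m : ℤ} (hm : 0 < m) {h : A} (hh : h ∈ 𝒜 m)
    (hne : h ≠ 0) {ν : ℤ} {a : A} (ha : a ∈ 𝒜 ν)
    (hmem : a ∈ Ideal.span {h - 1}) : a = 0 := by
  classical
  rw [Ideal.mem_span_singleton] at hmem
  obtain ⟨b, rfl⟩ := hmem
  rcases eq_or_ne b 0 with rfl | hb
  · rw [mul_zero]
  exfalso
  have hdec : DirectSum.decompose 𝒜 b ≠ 0 := by
    intro hcon
    apply hb
    have := congrArg (DirectSum.decompose 𝒜).symm hcon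
    simpa using this
  have hsupp : (DirectSum.decompose 𝒜 b).support.Nonempty := by
    rw [Finset.nonempty_iff_ne_empty]
    intro hcon
    exact hdec (DFinsupp.support_eq_empty.mp hcon)
  set f := DirectSum.decompose 𝒜 b with hf
  set ν₁ := f.support.max' hsupp with hν₁
  set ν₀ := f.support.min' hsupp with hν₀
  have hcomp : ∀ μ : ℤ, (DirectSum.decompose 𝒜 ((h - 1) * b) μ : A)
      = h * (f (μ - m) : A) - (f μ : A) := by
    intro μ
    rw [sub_mul, one_mul, DirectSum.decompose_sub, DirectSum.sub_apply,
      Submodule.coe_sub, aux_decompose_hmul 𝒜 hh]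
  have key : ∀ μ : ℤ, (DirectSum.decompose 𝒜 ((h - 1) * b) μ : A) ≠ 0 → μ = ν := by
    intro μ hμ
    by_contra hcon
    exact hμ (DirectSum.decompose_of_mem_ne 𝒜 ha (Ne.symm hcon))
  have hout : ∀ μ : ℤ, μ ∉ f.support → (f μ : A) = 0 := by
    intro μ hμ
    rw [DFinsupp.notMem_support_iff] at hμ
    rw [hμ, ZeroMemClass.coe_zero]
  have h1 : ν = ν₁ + m := by
    symm; apply key
    rw [hcomp]
    have e1 : (f (ν₁ + m) : A) = 0 := hout _ (fun hc => by
      have := f.support.le_max' _ hc; omega)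
    rw [show ν₁ + m - m = ν₁ by ring, e1, sub_zero]
    exact mul_ne_zero hne (by
      simpa [ZeroMemClass.coe_eq_zero] using f.support.max'_mem hsupp)
  have h0 : ν = ν₀ := by
    symm; apply key
    rw [hcomp]
    have e1 : (f (ν₀ - m) : A) = 0 := hout _ (fun hc => by
      have := f.support.min'_le _ hc; omega)
    rw [e1, mul_zero, zero_sub]
    simpa [ZeroMemClass.coe_eq_zero] using f.support.min'_mem hsupp
  have : ν₀ ≤ ν₁ := f.support.min'_le _ (f.support.max'_mem hsupp)
  omega

end Aux


section Aux2

variable {k A : Type*} [Field k] [CommRing A] [Algebra k A]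
variable (𝒜 : ℤ → Submodule k A) [GradedAlgebra 𝒜]

open Classical in
/-- Projection onto the sum of components whose degree has a given class mod `m`. -/
noncomputable def Qproj (m : ℕ) (r : ZMod m) : A →+ A :=
  (DirectSum.coeAddMonoidHom 𝒜).comp
    ((DFinsupp.filterAddMonoidHom (fun ν : ℤ => (𝒜 ν : Submodule k A))
        (fun ν : ℤ => (ν : ZMod m) = r)).comp
      (DirectSum.decomposeAddEquiv 𝒜).toAddMonoidHom)

theorem Qproj_of_mem {m : ℕ} {r : ZMod m} {ν : ℤ} {x : A} (hx : x ∈ 𝒜 ν) :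
    Qproj 𝒜 m r x = if (ν : ZMod m) = r then x else 0 := by
  classical
  have hrw : Qproj 𝒜 m r x = (DirectSum.coeAddMonoidHom 𝒜)
      (DFinsupp.filter (fun ν : ℤ => (ν : ZMod m) = r) (DirectSum.decompose 𝒜 x)) := rfl
  rw [hrw, DirectSum.decompose_of_mem 𝒜 hx]
  have hsingle : DirectSum.of (fun i => ↥(𝒜 i)) ν ⟨x, hx⟩
      = DFinsupp.single ν (⟨x, hx⟩ : ↥(𝒜 ν)) := rfl
  rw [hsingle, DFinsupp.filter_single]
  by_cases hc : ((ν : ZMod m) = r)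
  · rw [if_pos hc, if_pos hc, ← hsingle, DirectSum.coeAddMonoidHom_of]
  · rw [if_neg hc, if_neg hc, map_zero]

theorem Qproj_hmul {m : ℕ} {r : ZMod m} {h : A} (hh : h ∈ 𝒜 (m : ℤ)) (b : A) :
    Qproj 𝒜 m r (h * b) = h * Qproj 𝒜 m r b := by
  induction b using DirectSum.Decomposition.inductionOn 𝒜 with
  | zero => rw [mul_zero, map_zero, mul_zero]
  | @homogeneous i x =>
      have hx : (x : A) ∈ 𝒜 i := x.2
      have hmul : h * (x : A) ∈ 𝒜 ((m : ℤ) + i) := SetLike.mul_mem_graded hh hx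
      rw [Qproj_of_mem 𝒜 hmul, Qproj_of_mem 𝒜 hx]
      have : (((m : ℤ) + i : ℤ) : ZMod m) = ((i : ℤ) : ZMod m) := by
        push_cast
        simp [ZMod.natCast_self]
      rw [this]
      split_ifs
      · rfl
      · rw [mul_zero]
  | add b b' hb hb' => rw [mul_add, map_add, hb, hb', map_add, mul_add]

theorem Qproj_mem_span {m : ℕ} {r : ZMod m} {h : A} (hh : h ∈ 𝒜 (m : ℤ)) {a : A}
    (ha : a ∈ Ideal.span {h - 1}) : Qproj 𝒜 m r a ∈ Ideal.span {h - 1} := by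
  rw [Ideal.mem_span_singleton] at ha ⊢
  obtain ⟨b, rfl⟩ := ha
  refine ⟨Qproj 𝒜 m r b, ?_⟩
  rw [sub_mul, one_mul, map_sub, Qproj_hmul 𝒜 hh, sub_mul, one_mul]

end Aux2


section Aux3

variable {k A : Type*} [Field k] [CommRing A] [Algebra k A]
variable (𝒜 : ℤ → Submodule k A) [GradedAlgebra 𝒜]

theorem aux_pi_h {h : A} : Ideal.Quotient.mk (Ideal.span {h - 1}) h = 1 := by
  have : Ideal.Quotient.mk (Ideal.span {h - 1}) (h - 1) = 0 :=
    Ideal.Quotient.eq_zero_iff_mem.mpr (Ideal.subset_span rfl)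
  rw [map_sub, map_one, sub_eq_zero] at this
  exact this

/-- Combine two homogeneous elements of congruent degrees into one, modulo `(h-1)`. -/
theorem aux_combine {m : ℕ} {h : A} (hh : h ∈ 𝒜 (m : ℤ)) {ν₁ ν₂ : ℤ} {c₁ c₂ : A}
    (h1 : c₁ ∈ 𝒜 ν₁) (h2 : c₂ ∈ 𝒜 ν₂) (hdvd : (m : ℤ) ∣ ν₂ - ν₁) :
    ∃ (ν : ℤ) (c : A), c ∈ 𝒜 ν ∧ (ν : ZMod m) = (ν₁ : ZMod m) ∧
      Ideal.Quotient.mk (Ideal.span {h - 1}) c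
        = Ideal.Quotient.mk (Ideal.span {h - 1}) c₁
          + Ideal.Quotient.mk (Ideal.span {h - 1}) c₂ := by
  set π := Ideal.Quotient.mk (Ideal.span {h - 1}) with hπ
  obtain ⟨s, hs⟩ := hdvd
  have hpow : ∀ (t : ℕ) (x : A) (ν : ℤ), x ∈ 𝒜 ν → (h ^ t * x ∈ 𝒜 ((m : ℤ) * t + ν) ∧
      π (h ^ t * x) = π x) := by
    intro t x ν hx
    constructor
    · have := SetLike.mul_mem_graded (SetLike.pow_mem_graded t hh) hx
      convert this using 2
      push_cast
      ring
    · rw [map_mul, map_pow, aux_pi_h, one_pow, one_mul]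
  rcases le_or_gt 0 s with hs0 | hs0
  · refine ⟨ν₂, h ^ s.toNat * c₁ + c₂, ?_, ?_, ?_⟩
    · apply Submodule.add_mem _ _ h2
      have := (hpow s.toNat c₁ ν₁ h1).1
      convert this using 2
      rw [Int.toNat_of_nonneg hs0]
      linear_combination hs
    · have : ((ν₂ - ν₁ : ℤ) : ZMod m) = 0 := by
        rw [hs]; push_cast; simp [ZMod.natCast_self]
      push_cast at this ⊢
      linear_combination this
    · rw [map_add, (hpow s.toNat c₁ ν₁ h1).2]
  · refine ⟨ν₁, c₁ + h ^ (-s).toNat * c₂, ?_, rfl, ?_⟩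
    · apply Submodule.add_mem _ h1
      have := (hpow (-s).toNat c₂ ν₂ h2).1
      convert this using 2
      rw [Int.toNat_of_nonneg (by omega : (0:ℤ) ≤ -s)]
      linear_combination -hs
    · rw [map_add, (hpow (-s).toNat c₂ ν₂ h2).2]

end Aux3


section Aux4

variable {k A : Type*} [Field k] [CommRing A] [Algebra k A]
variable (𝒜 : ℤ → Submodule k A) [GradedAlgebra 𝒜]

/-- Every element of the quotient is the image of a sum of homogeneous elements,
one for each class mod `m`. -/
theorem aux_claimC {m : ℕ} [NeZero m] {h : A} (hh : h ∈ 𝒜 (m : ℤ)) (a : A) :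
    ∃ (M : ZMod m → ℤ) (c : ZMod m → A),
      (∀ r, c r ∈ 𝒜 (M r)) ∧ (∀ r, ((M r : ℤ) : ZMod m) = r) ∧
      Ideal.Quotient.mk (Ideal.span {h - 1}) (∑ r : ZMod m, c r)
        = Ideal.Quotient.mk (Ideal.span {h - 1}) a := by
  set π := Ideal.Quotient.mk (Ideal.span {h - 1}) with hπ
  induction a using DirectSum.Decomposition.inductionOn 𝒜 with
  | zero =>
      refine ⟨fun r => (r.val : ℤ), fun _ => 0, fun r => Submodule.zero_mem _, ?_, ?_⟩
      · intro r
        rw [Int.cast_natCast]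
        exact ZMod.natCast_rightInverse r
      · rw [Finset.sum_const_zero]
  | @homogeneous ν x =>
      classical
      refine ⟨fun r => if r = ((ν : ℤ) : ZMod m) then ν else (r.val : ℤ),
        fun r => if r = ((ν : ℤ) : ZMod m) then (x : A) else 0, ?_, ?_, ?_⟩
      · intro r
        dsimp only
        by_cases hc : r = ((ν : ℤ) : ZMod m)
        · rw [if_pos hc, if_pos hc]; exact x.2
        · rw [if_neg hc, if_neg hc]; exact Submodule.zero_mem _
      · intro r
        dsimp only
        by_cases hc : r = ((ν : ℤ) : ZMod m)
        · rw [if_pos hc, hc]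
        · rw [if_neg hc, Int.cast_natCast]
          exact ZMod.natCast_rightInverse r
      · dsimp only
        rw [Finset.sum_ite_eq' Finset.univ ((ν : ℤ) : ZMod m) (fun _ => (x : A)),
          if_pos (Finset.mem_univ _)]
  | add a b iha ihb =>
      obtain ⟨M, c, hc, hM, hsum⟩ := iha
      obtain ⟨M', c', hc', hM', hsum'⟩ := ihb
      have key : ∀ r : ZMod m, ∃ (ν : ℤ) (x : A), x ∈ 𝒜 ν ∧ ((ν : ℤ) : ZMod m) = r ∧
          π x = π (c r) + π (c' r) := by
        intro r
        have hdvd : (m : ℤ) ∣ (M' r - M r) := by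
          rw [← ZMod.intCast_zmod_eq_zero_iff_dvd]
          push_cast
          rw [hM, hM', sub_self]
        obtain ⟨ν, x, hx, hcast, hquot⟩ := aux_combine 𝒜 hh (hc r) (hc' r) hdvd
        exact ⟨ν, x, hx, by rw [hcast, hM], hquot⟩
      choose M'' c'' hmem'' hcast'' hquot'' using key
      refine ⟨M'', c'', hmem'', hcast'', ?_⟩
      rw [map_sum, map_add, ← hsum, ← hsum', map_sum, map_sum, ← Finset.sum_add_distrib]
      exact Finset.sum_congr rfl fun r _ => hquot'' r

/-- Every element of the span of class-`i` homogeneous elements is congruent to a single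
homogeneous element mod `(h-1)`. -/
theorem aux_claimC' {m : ℕ} [NeZero m] {h : A} (hh : h ∈ 𝒜 (m : ℤ)) (i : ZMod m) (a : A)
    (ha : a ∈ Submodule.span k {a : A | ∃ ν : ℤ, ((ν : ZMod m) = i) ∧ a ∈ 𝒜 ν}) :
    ∃ (ν : ℤ) (c : A), ((ν : ZMod m) = i) ∧ c ∈ 𝒜 ν ∧
      Ideal.Quotient.mk (Ideal.span {h - 1}) c
        = Ideal.Quotient.mk (Ideal.span {h - 1}) a := by
  set π := Ideal.Quotient.mk (Ideal.span {h - 1}) with hπ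
  induction ha using Submodule.span_induction with
  | mem x hx => obtain ⟨ν, hνi, hx⟩ := hx; exact ⟨ν, x, hνi, hx, rfl⟩
  | zero =>
      refine ⟨(i.val : ℤ), 0, ?_, Submodule.zero_mem _, rfl⟩
      rw [Int.cast_natCast]
      exact ZMod.natCast_rightInverse i
  | add x y hx hy ihx ihy =>
      obtain ⟨ν₁, c₁, hν₁, hc₁, hq₁⟩ := ihx
      obtain ⟨ν₂, c₂, hν₂, hc₂, hq₂⟩ := ihy
      have hdvd : (m : ℤ) ∣ (ν₂ - ν₁) := by
        rw [← ZMod.intCast_zmod_eq_zero_iff_dvd]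
        push_cast
        rw [hν₁, hν₂, sub_self]
      obtain ⟨ν, c, hc, hcast, hquot⟩ := aux_combine 𝒜 hh hc₁ hc₂ hdvd
      exact ⟨ν, c, by rw [hcast, hν₁], hc, by rw [hquot, hq₁, hq₂, map_add]⟩
  | smul r x hx ihx =>
      obtain ⟨ν, c, hν, hc, hq⟩ := ihx
      refine ⟨ν, r • c, hν, Submodule.smul_mem _ _ hc, ?_⟩
      rw [Algebra.smul_def, Algebra.smul_def, map_mul, hq]
      congr 1

end Aux4

/-- Lemma 1.8: let `A` be a positively graded affine domain with `e(A)=1`,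
`∂` a nonzero homogeneous locally nilpotent derivation of degree `−d`, `h ∈ A^∂_m`
(`m > 0`), and `F = A/(h−1)` a domain with induced derivation `∂̄`. Then the image of the
graded kernel `A^∂` in `F` equals `ker ∂̄`, and the support of the `ℤ/mℤ`-grading of
`F^{∂̄}` is the subgroup of `ℤ/mℤ` generated by the class of `e(A^∂)`. -/
theorem stmt19 {k A : Type*} [Field k] [CharZero k] [CommRing A] [IsDomain A]
    [Algebra k A] [Algebra.FiniteType k A]
    (𝒜 : ℤ → Submodule k A) [GradedAlgebra 𝒜]
    (hpos : ∀ ν : ℤ, ν < 0 → 𝒜 ν = ⊥)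
    (hsat : AddSubgroup.closure {ν : ℤ | 𝒜 ν ≠ ⊥} = ⊤)
    (D : Derivation k A A) (hD : IsLND D) (hne : D ≠ 0)
    (d : ℤ) (hhom : ∀ ν : ℤ, ∀ a ∈ 𝒜 ν, D a ∈ 𝒜 (ν - d))
    (m : ℕ) (hm : 0 < m) (h : A) (hh : h ∈ 𝒜 (m : ℤ)) (hker : D h = 0)
    (hdom : IsDomain (A ⧸ Ideal.span {h - 1}))
    (D' : Derivation k (A ⧸ Ideal.span {h - 1}) (A ⧸ Ideal.span {h - 1}))
    (hD' : ∀ a : A, D' (Ideal.Quotient.mk (Ideal.span {h - 1}) a)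
        = Ideal.Quotient.mk (Ideal.span {h - 1}) (D a))
    (e : ℕ)
    (he : AddSubgroup.closure {ν : ℤ | ∃ a ∈ 𝒜 ν, a ≠ 0 ∧ D a = 0}
        = AddSubgroup.closure {(e : ℤ)}) :
    (Ideal.Quotient.mk (Ideal.span {h - 1}) '' {a : A | D a = 0}
        = {x : A ⧸ Ideal.span {h - 1} | D' x = 0}) ∧
    (∀ i : ZMod m,
      (∃ x ∈ Submodule.span k ((Ideal.Quotient.mk (Ideal.span {h - 1})) ''
          {a : A | ∃ ν : ℤ, ((ν : ZMod m) = i) ∧ a ∈ 𝒜 ν}),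
        x ≠ 0 ∧ D' x = 0) ↔
      i ∈ AddSubgroup.closure {((e : ℤ) : ZMod m)}) := by
  haveI : NeZero m := ⟨hm.ne'⟩
  haveI := hdom
  have hmz : (0 : ℤ) < (m : ℤ) := by exact_mod_cast hm
  have hne0 : h ≠ 0 := by
    intro h0
    have hu : Ideal.span {h - 1} = ⊤ := by
      rw [Ideal.span_singleton_eq_top, h0, zero_sub]
      exact isUnit_one.neg
    haveI hsub : Subsingleton (A ⧸ Ideal.span {h - 1}) :=
      Ideal.Quotient.subsingleton_iff.mpr hu
    obtain ⟨x, y, hxy⟩ := hdom.toNontrivial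
    exact hxy (Subsingleton.elim x y)
  set π := Ideal.Quotient.mk (Ideal.span {h - 1}) with hπdef
  have homog_zero : ∀ {ν : ℤ} {a : A}, a ∈ 𝒜 ν → π a = 0 → a = 0 := by
    intro ν a hmem h0
    exact aux_homog_mem_span 𝒜 hmz hh hne0 hmem (Ideal.Quotient.eq_zero_iff_mem.mp h0)
  have part1 : π '' {a : A | D a = 0} = {x : A ⧸ Ideal.span {h - 1} | D' x = 0} := by
    apply Set.Subset.antisymm
    · rintro x ⟨a, ha, rfl⟩
      show D' (π a) = 0
      rw [hD' a, ha, map_zero]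
    · rintro x hx
      obtain ⟨a, rfl⟩ := Ideal.Quotient.mk_surjective x
      obtain ⟨M, c, hc, hM, hsum⟩ := aux_claimC 𝒜 hh a
      refine ⟨∑ r : ZMod m, c r, ?_, hsum⟩
      show D (∑ r : ZMod m, c r) = 0
      have hDsum : D (∑ r : ZMod m, c r) = ∑ r : ZMod m, D (c r) := map_sum D _ _
      have hIDsum : D (∑ r : ZMod m, c r) ∈ Ideal.span {h - 1} := by
        rw [← Ideal.Quotient.eq_zero_iff_mem, ← hπdef, ← hD' _, hsum]
        exact hx
      have hr0 : ∀ r₀ : ZMod m, D (c r₀) = 0 := by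
        intro r₀
        have hQ : Qproj 𝒜 m (((M r₀ - d : ℤ) : ZMod m)) (D (∑ r : ZMod m, c r))
            = D (c r₀) := by
          rw [hDsum, map_sum, Finset.sum_eq_single r₀]
          · rw [Qproj_of_mem 𝒜 (hhom _ _ (hc r₀)), if_pos rfl]
          · intro r _ hr
            rw [Qproj_of_mem 𝒜 (hhom _ _ (hc r)), if_neg]
            intro hcon
            apply hr
            have hMM : ((M r : ℤ) : ZMod m) = ((M r₀ : ℤ) : ZMod m) := by
              push_cast at hcon ⊢
              linear_combination hcon
            rw [hM r, hM r₀] at hMM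
            exact hMM
          · intro habs; exact absurd (Finset.mem_univ r₀) habs
        have hmemI : D (c r₀) ∈ Ideal.span {h - 1} := hQ ▸ Qproj_mem_span 𝒜 hh hIDsum
        exact homog_zero (hhom _ _ (hc r₀)) (Ideal.Quotient.eq_zero_iff_mem.mpr hmemI)
      rw [hDsum]
      exact Finset.sum_eq_zero fun r _ => hr0 r
  refine ⟨part1, fun i => ?_⟩
  constructor
  · rintro ⟨x, hxspan, hx0, hxD⟩
    have himg : (π '' {a : A | ∃ ν : ℤ, ((ν : ZMod m) = i) ∧ a ∈ 𝒜 ν} : Set (A ⧸ Ideal.span {h - 1}))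
        = (Ideal.Quotient.mkₐ k (Ideal.span {h - 1})).toLinearMap ''
            {a : A | ∃ ν : ℤ, ((ν : ZMod m) = i) ∧ a ∈ 𝒜 ν} := by
      ext y
      simp only [Set.mem_image]
      constructor
      · rintro ⟨b, hb, rfl⟩
        exact ⟨b, hb, by rw [AlgHom.toLinearMap_apply, Ideal.Quotient.mkₐ_eq_mk, hπdef]⟩
      · rintro ⟨b, hb, hby⟩
        exact ⟨b, hb, by rw [← hby, AlgHom.toLinearMap_apply, Ideal.Quotient.mkₐ_eq_mk, hπdef]⟩
    rw [himg, Submodule.span_image] at hxspan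
    obtain ⟨a, haspan, hax⟩ := hxspan
    have hax' : π a = x := by
      rw [← hax, AlgHom.toLinearMap_apply, Ideal.Quotient.mkₐ_eq_mk, hπdef]
    obtain ⟨ν, c, hνi, hcν, hπc⟩ := aux_claimC' 𝒜 hh i a haspan
    have hDc : D c = 0 := by
      apply homog_zero (hhom _ _ hcν)
      rw [← hD' c, hπc, hax', hxD]
    have hc0 : c ≠ 0 := by
      intro h0
      apply hx0
      rw [← hax', ← hπc, h0, map_zero]
    have hνT : ν ∈ AddSubgroup.closure {(e : ℤ)} :=
      he ▸ AddSubgroup.subset_closure ⟨c, hcν, hc0, hDc⟩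
    rw [AddSubgroup.mem_closure_singleton] at hνT
    obtain ⟨n, hn⟩ := hνT
    rw [AddSubgroup.mem_closure_singleton]
    refine ⟨n, ?_⟩
    rw [← hνi, ← hn]
    push_cast [zsmul_eq_mul]
    ring
  · intro hi
    have hT : ∀ j ∈ AddSubgroup.closure {((e : ℤ) : ZMod m)},
        ∃ ν : ℤ, (∃ a ∈ 𝒜 ν, a ≠ 0 ∧ D a = 0) ∧ ((ν : ZMod m) = j) := by
      set H : AddSubgroup (ZMod m) :=
        { carrier := {j | ∃ ν : ℤ, (∃ a ∈ 𝒜 ν, a ≠ 0 ∧ D a = 0) ∧ ((ν : ZMod m) = j)}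
          zero_mem' := ⟨0, ⟨1, SetLike.one_mem_graded 𝒜, one_ne_zero,
            Derivation.map_one_eq_zero D⟩, by simp⟩
          add_mem' := by
            rintro j₁ j₂ ⟨ν₁, ⟨a₁, h₁, n₁, D₁⟩, c₁⟩ ⟨ν₂, ⟨a₂, h₂, n₂, D₂⟩, c₂⟩
            refine ⟨ν₁ + ν₂, ⟨a₁ * a₂, SetLike.mul_mem_graded h₁ h₂, mul_ne_zero n₁ n₂, ?_⟩, ?_⟩
            · rw [Derivation.leibniz, D₁, D₂, smul_zero, smul_zero, add_zero]
            · push_cast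
              rw [c₁, c₂]
          neg_mem' := by
            rintro j ⟨ν, ⟨a, ha, na, Da⟩, cj⟩
            refine ⟨((m - 1 : ℕ) : ℤ) * ν, ⟨a ^ (m - 1), ?_, pow_ne_zero _ na, ?_⟩, ?_⟩
            · have := SetLike.pow_mem_graded (m - 1) ha
              rwa [nsmul_eq_mul] at this
            · rw [Derivation.leibniz_pow, Da, smul_zero, smul_zero]
            · have hm1 : ((m - 1 : ℕ) : ZMod m) = -1 := by
                rw [Nat.cast_sub hm, ZMod.natCast_self, Nat.cast_one, zero_sub]
              push_cast
              rw [hm1, cj]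
              ring }
      intro j hj
      have hle : AddSubgroup.closure {((e : ℤ) : ZMod m)} ≤ H := by
        have h1 : AddSubgroup.closure ({((e : ℤ) : ZMod m)} : Set (ZMod m))
            = AddSubgroup.map (Int.castAddHom (ZMod m)) (AddSubgroup.closure {(e : ℤ)}) := by
          rw [AddMonoidHom.map_closure, Set.image_singleton, Int.coe_castAddHom]
        rw [h1, ← he, AddMonoidHom.map_closure]
        apply (AddSubgroup.closure_le H).mpr
        rintro _ ⟨ν, hν, rfl⟩
        exact ⟨ν, hν, by rw [Int.coe_castAddHom]⟩
      exact hle hj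
    obtain ⟨ν, ⟨a, haν, ha0, haD⟩, hνi⟩ := hT i hi
    refine ⟨π a, Submodule.subset_span ⟨a, ⟨ν, hνi, haν⟩, rfl⟩, ?_, ?_⟩
    · intro h0
      exact ha0 (homog_zero haν h0)
    · rw [hπdef] at *
      rw [hD' a, haD, map_zero]
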